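/- Let g : [a,b] → ℝ be C² with a < 0 < b, g(0)=0, g'(0)=1, x·g(x)>0 for x ∈ [a,b]\{0}, and G(x)=∫₀ˣ g(t)dt. If x·g''(x) < 0 for all x ∈ [a,b]\{0}, then g(x)² - 2 G(x) g'(x) > 0 for all x ∈ [a,b]\{0}. -/

import Mathlib

open Set

theorem thm21_first_implication (g : ℝ → ℝ) (a b : ℝ) (ha : a < 0) (hb : 0 < b)
    (hg : ContDiff ℝ 2 g) (h0 : g 0 = 0) (h1 : deriv g 0 = 1)
    (hxg : ∀ x ∈ Icc a b, x ≠ 0 → 0 < x * g x)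
    (G : ℝ → ℝ) (hG : ∀ x, G x = ∫ t in (0:ℝ)..x, g t)
    (hconc : ∀ x ∈ Icc a b, x ≠ 0 → x * iteratedDeriv 2 g x < 0) :
    ∀ x ∈ Icc a b, x ≠ 0 → g x ^ 2 - 2 * G x * deriv g x > 0 := by
  have hGeq : G = fun x => ∫ t in (0:ℝ)..x, g t := funext hG
  subst hGeq
  have hgc : Continuous g := hg.continuous
  have hgd : Differentiable ℝ g := hg.differentiable (by norm_num)
  have h2 : ContDiff ℝ 1 (deriv g) := by
    have : ContDiff ℝ ((1:ℕ)+1) g := by norm_num; exact hg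
    exact (contDiff_succ_iff_deriv.mp this).2.2
  have hg'd : Differentiable ℝ (deriv g) := h2.differentiable one_ne_zero
  have hit2 : iteratedDeriv 2 g = deriv (deriv g) := by
    simp [iteratedDeriv_succ, iteratedDeriv_zero]
  set F := fun x => g x ^ 2 - 2 * (∫ t in (0:ℝ)..x, g t) * deriv g x with hFdef
  have hF : ∀ x, HasDerivAt F
      (-2 * (∫ t in (0:ℝ)..x, g t) * deriv (deriv g) x) x := by
    intro x
    have hpow : HasDerivAt (fun x => g x ^ 2) (2 * g x * deriv g x) x := by
      have := (hgd x).hasDerivAt.fun_pow 2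
      exact this.congr_deriv (by ring)
    have hInt : HasDerivAt (fun u => ∫ t in (0:ℝ)..u, g t) (g x) x :=
      intervalIntegral.integral_hasDerivAt_right (hgc.intervalIntegrable 0 x)
        (hgc.stronglyMeasurable.stronglyMeasurableAtFilter) hgc.continuousAt
    have hg' : HasDerivAt (deriv g) (deriv (deriv g) x) x := (hg'd x).hasDerivAt
    have := hpow.fun_sub (((hInt.const_mul 2)).fun_mul hg')
    exact this.congr_deriv (by ring)
  have hGpos : ∀ x ∈ Icc a b, x ≠ 0 → 0 < ∫ t in (0:ℝ)..x, g t := by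
    intro x hx hx0
    rcases hx0.lt_or_gt with hneg | hpos
    · rw [intervalIntegral.integral_symm]
      have hpos' : 0 < ∫ t in x..(0:ℝ), -g t := by
        apply intervalIntegral.intervalIntegral_pos_of_pos_on
          ((hgc.neg).intervalIntegrable x 0) _ hneg
        intro t ht
        have ht1 : t ∈ Icc a b := ⟨le_trans hx.1 ht.1.le, le_trans ht.2.le hb.le⟩
        have := hxg t ht1 (ne_of_lt ht.2)
        rw [Pi.neg_apply]
        nlinarith [ht.2]
      rw [intervalIntegral.integral_neg] at hpos'
      linarith
    · apply intervalIntegral.intervalIntegral_pos_of_pos_on (hgc.intervalIntegrable 0 x) _ hpos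
      intro t ht
      have ht1 : t ∈ Icc a b := ⟨le_trans ha.le ht.1.le, le_trans ht.2.le hx.2⟩
      have := hxg t ht1 (ne_of_gt ht.1)
      nlinarith [ht.1]
  have hFdiff : Differentiable ℝ F := fun x => (hF x).differentiableAt
  have hmono : StrictMonoOn F (Icc 0 b) := by
    apply strictMonoOn_of_deriv_pos (convex_Icc 0 b) hFdiff.continuous.continuousOn
    intro x hx
    rw [interior_Icc] at hx
    have hxab : x ∈ Icc a b := ⟨le_trans ha.le hx.1.le, hx.2.le⟩
    have hg'' := hconc x hxab (ne_of_gt hx.1)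
    rw [hit2] at hg''
    have hGp := hGpos x hxab (ne_of_gt hx.1)
    rw [(hF x).deriv]
    nlinarith [hx.1]
  have hanti : StrictAntiOn F (Icc a 0) := by
    apply strictAntiOn_of_deriv_neg (convex_Icc a 0) hFdiff.continuous.continuousOn
    intro x hx
    rw [interior_Icc] at hx
    have hxab : x ∈ Icc a b := ⟨hx.1.le, le_trans hx.2.le hb.le⟩
    have hg'' := hconc x hxab (ne_of_lt hx.2)
    rw [hit2] at hg''
    have hGp := hGpos x hxab (ne_of_lt hx.2)
    rw [(hF x).deriv]
    nlinarith [hx.2]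
  have hF0 : F 0 = 0 := by simp [hFdef, h0]
  intro x hx hx0
  rcases hx0.lt_or_gt with hneg | hpos
  · have h := hanti ⟨hx.1, hneg.le⟩ ⟨ha.le, le_rfl⟩ hneg
    rw [hF0] at h
    exact h
  · have h := hmono ⟨le_rfl, hb.le⟩ ⟨hpos.le, hx.2⟩ hpos
    rw [hF0] at h
    exact h
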